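/- Let g : ℝ → ℝ be given by g(x) = ∫_ℝ e^{ixy} ĝ(y) dy for an integrable function ĝ with ∫_ℝ |y ĝ(y)| dy < ∞. Then for any two self-adjoint matrices X, Y ∈ M_N(ℂ), the operator norm satisfies ‖g(X) - g(Y)‖ ≤ ‖X - Y‖ · ∫_ℝ |y ĝ(y)| dy. -/

import Mathlib

open MeasureTheory Matrix
open scoped Matrix.Norms.L2Operator

open NormedSpace
lemma norm_exp_skew_le_one {N : ℕ} (M : Matrix (Fin N) (Fin N) ℂ) (h : Mᴴ = -M) :
    ‖exp M‖ ≤ 1 := by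
  rcases subsingleton_or_nontrivial (Matrix (Fin N) (Fin N) ℂ) with hs | hn
  · simp [Subsingleton.elim (exp M) 0]
  · have hstar : star (exp M) = exp (-M) := by
      rw [star_exp, Matrix.star_eq_conjTranspose, h]
    have hc : Commute (-M) M := (Commute.refl M).neg_left
    have h1 : exp (-M) * exp M = 1 := by
      rw [← Matrix.exp_add_of_commute _ _ hc, neg_add_cancel, exp_zero]
    have h2 : exp M * exp (-M) = 1 := by
      rw [← Matrix.exp_add_of_commute _ _ hc.symm, add_neg_cancel, exp_zero]
    have hmem : exp M ∈ unitary (Matrix (Fin N) (Fin N) ℂ) := by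
      rw [Unitary.mem_iff, hstar]; exact ⟨h1, h2⟩
    rw [CStarRing.norm_of_mem_unitary hmem]

lemma skew_smul {N : ℕ} (t : ℝ) (M : Matrix (Fin N) (Fin N) ℂ) (h : Mᴴ = -M) :
    ((t : ℂ) • M)ᴴ = -((t : ℂ) • M) := by
  rw [Matrix.conjTranspose_smul, h, Complex.star_def, Complex.conj_ofReal, smul_neg]

lemma key {N : ℕ} (A B : Matrix (Fin N) (Fin N) ℂ) (hA : Aᴴ = -A) (hB : Bᴴ = -B) :
    ‖exp A - exp B‖ ≤ ‖A - B‖ := by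
  set f : ℝ → Matrix (Fin N) (Fin N) ℂ :=
    fun t => exp ((t : ℂ) • A) * exp ((t : ℂ) • (-B)) with hf
  have hderiv : ∀ t : ℝ, HasDerivAt f
      (exp ((t : ℂ) • A) * (A - B) * exp ((t : ℂ) • (-B))) t := by
    intro t
    have h1 : HasDerivAt (fun s : ℝ => exp ((s : ℂ) • A)) (exp ((t : ℂ) • A) * A) t := by
      have := (hasDerivAt_exp_smul_const (𝕂 := ℂ) A (t : ℂ)).scomp t
        Complex.ofRealCLM.hasDerivAt
      rw [Complex.ofRealCLM_apply, Complex.ofReal_one, one_smul] at this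
      exact this
    have h2 : HasDerivAt (fun s : ℝ => exp ((s : ℂ) • (-B)))
        (exp ((t : ℂ) • (-B)) * (-B)) t := by
      have := (hasDerivAt_exp_smul_const (𝕂 := ℂ) (-B) (t : ℂ)).scomp t
        Complex.ofRealCLM.hasDerivAt
      rw [Complex.ofRealCLM_apply, Complex.ofReal_one, one_smul] at this
      exact this
    have := h1.mul h2
    refine this.congr_deriv ?_
    have hcomm : exp ((t : ℂ) • (-B)) * (-B) = (-B) * exp ((t : ℂ) • (-B)) :=
      (((Commute.refl (-B)).smul_left (t : ℂ)).exp_left).eq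
    rw [hcomm]
    noncomm_ring
  have hbound : ∀ t ∈ Set.Ico (0:ℝ) 1,
      ‖exp ((t : ℂ) • A) * (A - B) * exp ((t : ℂ) • (-B))‖ ≤ ‖A - B‖ := by
    intro t _
    calc ‖exp ((t : ℂ) • A) * (A - B) * exp ((t : ℂ) • (-B))‖
        ≤ ‖exp ((t : ℂ) • A) * (A - B)‖ * ‖exp ((t : ℂ) • (-B))‖ := norm_mul_le _ _
      _ ≤ ‖exp ((t : ℂ) • A)‖ * ‖A - B‖ * ‖exp ((t : ℂ) • (-B))‖ := by
          gcongr; exact norm_mul_le _ _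
      _ ≤ 1 * ‖A - B‖ * 1 := by
          gcongr
          · exact norm_exp_skew_le_one _ (skew_smul t A hA)
          · exact norm_exp_skew_le_one _ (skew_smul t (-B) (by rw [Matrix.conjTranspose_neg, hB, neg_neg]))
      _ = ‖A - B‖ := by ring
  have hmvt : ‖f 1 - f 0‖ ≤ ‖A - B‖ :=
    norm_image_sub_le_of_norm_deriv_le_segment_01'
      (fun t ht => (hderiv t).hasDerivWithinAt) hbound
  have hinv : exp (-B) * exp B = 1 := by
    rw [← Matrix.exp_add_of_commute _ _ (Commute.refl B).neg_left, neg_add_cancel, exp_zero]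
  have heq : exp A - exp B = (f 1 - f 0) * exp B := by
    simp only [hf, Complex.ofReal_one, Complex.ofReal_zero, one_smul, zero_smul,
      exp_zero, mul_one, one_mul]
    rw [sub_mul, one_mul, mul_assoc, hinv, mul_one]
  calc ‖exp A - exp B‖ = ‖(f 1 - f 0) * exp B‖ := by rw [heq]
    _ ≤ ‖f 1 - f 0‖ * ‖exp B‖ := norm_mul_le _ _
    _ ≤ ‖A - B‖ * 1 :=
        mul_le_mul hmvt (norm_exp_skew_le_one _ hB) (norm_nonneg _) (norm_nonneg _)
    _ = ‖A - B‖ := mul_one _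

/-- Let `g(x) = ∫ e^{ixy} gHat(y) dy` with `∫ |y gHat(y)| dy < ∞`.  Then for self-adjoint
matrices `X, Y`, the functional calculus `g(X) = ∫ gHat(y) e^{iyX} dy` satisfies
`‖g(X) - g(Y)‖ ≤ ‖X - Y‖ · ∫ |y gHat(y)| dy` in operator norm. -/
theorem stmt_8 (N : ℕ) (g : ℝ → ℝ) (gHat : ℝ → ℂ)
    (hgHat : Integrable gHat) (hgHat' : Integrable fun y : ℝ => y • gHat y)
    (hfourier : ∀ x : ℝ, (g x : ℂ) = ∫ y : ℝ, Complex.exp (Complex.I * x * y) * gHat y)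
    (X Y : Matrix (Fin N) (Fin N) ℂ) (hX : X.IsHermitian) (hY : Y.IsHermitian) :
    ‖(∫ y : ℝ, gHat y • NormedSpace.exp ((Complex.I * y) • X)) -
        ∫ y : ℝ, gHat y • NormedSpace.exp ((Complex.I * y) • Y)‖ ≤
      ‖X - Y‖ * ∫ y : ℝ, |y| * ‖gHat y‖ := by
  have hskew : ∀ (y : ℝ) (M : Matrix (Fin N) (Fin N) ℂ), M.IsHermitian →
      ((Complex.I * y) • M)ᴴ = -((Complex.I * y) • M) := by
    intro y M hM
    rw [Matrix.conjTranspose_smul, hM.eq]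
    rw [show star (Complex.I * (y : ℂ)) = -(Complex.I * y) by
      simp [Complex.star_def, Complex.conj_ofReal]]
    rw [neg_smul]
  have hkey : ∀ y : ℝ, ‖exp ((Complex.I * y) • X) - exp ((Complex.I * y) • Y)‖ ≤
      |y| * ‖X - Y‖ := by
    intro y
    have := key ((Complex.I * y) • X) ((Complex.I * y) • Y) (hskew y X hX) (hskew y Y hY)
    calc ‖exp ((Complex.I * y) • X) - exp ((Complex.I * y) • Y)‖
        ≤ ‖(Complex.I * y) • X - (Complex.I * y) • Y‖ := this
      _ = |y| * ‖X - Y‖ := by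
          rw [← smul_sub, norm_smul]
          simp [_root_.map_mul]
  have hcont : ∀ M : Matrix (Fin N) (Fin N) ℂ,
      Continuous fun y : ℝ => exp ((Complex.I * y) • M) := fun M =>
    (continuous_iff_continuousAt.2 fun x => (exp_analytic (𝕂 := ℂ) x).continuousAt).comp ((continuous_const.mul Complex.continuous_ofReal).smul continuous_const)
  have hexple : ∀ (y : ℝ) (M : Matrix (Fin N) (Fin N) ℂ), M.IsHermitian →
      ‖exp ((Complex.I * y) • M)‖ ≤ 1 := fun y M hM =>
    norm_exp_skew_le_one _ (hskew y M hM)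
  have hint : ∀ M : Matrix (Fin N) (Fin N) ℂ, M.IsHermitian →
      Integrable (fun y : ℝ => gHat y • exp ((Complex.I * y) • M)) := by
    intro M hM
    refine hgHat.norm.mono' (hgHat.1.smul (hcont M).aestronglyMeasurable) ?_
    filter_upwards with y
    rw [norm_smul]
    exact mul_le_of_le_one_right (norm_nonneg _) (hexple y M hM)
  rw [← integral_sub (hint X hX) (hint Y hY)]
  have hptle : ∀ y : ℝ,
      ‖gHat y • exp ((Complex.I * y) • X) - gHat y • exp ((Complex.I * y) • Y)‖ ≤
        ‖X - Y‖ * (|y| * ‖gHat y‖) := by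
    intro y
    rw [← smul_sub, norm_smul]
    calc ‖gHat y‖ * ‖exp ((Complex.I * y) • X) - exp ((Complex.I * y) • Y)‖
        ≤ ‖gHat y‖ * (|y| * ‖X - Y‖) :=
          mul_le_mul_of_nonneg_left (hkey y) (norm_nonneg _)
      _ = ‖X - Y‖ * (|y| * ‖gHat y‖) := by ring
  have hnorm_eq : (fun y : ℝ => ‖y • gHat y‖) = fun y : ℝ => |y| * ‖gHat y‖ := by
    funext y; rw [norm_smul, Real.norm_eq_abs]
  have hRHS : Integrable (fun y : ℝ => ‖X - Y‖ * (|y| * ‖gHat y‖)) :=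
    (hnorm_eq ▸ hgHat'.norm).const_mul _
  calc ‖∫ y : ℝ, (gHat y • exp ((Complex.I * y) • X) -
          gHat y • exp ((Complex.I * y) • Y))‖
      ≤ ∫ y : ℝ, ‖gHat y • exp ((Complex.I * y) • X) -
          gHat y • exp ((Complex.I * y) • Y)‖ := norm_integral_le_integral_norm _
    _ ≤ ∫ y : ℝ, ‖X - Y‖ * (|y| * ‖gHat y‖) := by
        refine integral_mono_of_nonneg ?_ hRHS ?_
        · filter_upwards with y using norm_nonneg _
        · filter_upwards with y using hptle y
    _ = ‖X - Y‖ * ∫ y : ℝ, |y| * ‖gHat y‖ := integral_const_mul _ _
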